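/- Suppose A is drawn from SSBM(n,x*,p⁺,p⁻,q⁺,q⁻) under Assumption 1. Let γ, γ' be constants with 0 < γ + 1/log n < γ'. Then for all sufficiently large n and every index i ∈ {1,…,n}, P( x*_i · (Wx*)_i ≤ γ·log n ) ≤ n^{ −½((√α⁺ − √β⁺)² + (√α⁻ − √β⁻)²) + (γ'/2)·log(α⁺/β⁺) }. (Note that (Wx*)_i = (Ãx*)_i since Jx* = 0.) -/

import Mathlib

open MeasureTheory ProbabilityTheory Matrix

noncomputable section

/-- Entrywise positive part `A⁺` of a matrix. -/
def aPos {n : ℕ} (A : Matrix (Fin n) (Fin n) ℝ) : Matrix (Fin n) (Fin n) ℝ :=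
  Matrix.of fun i j => max (A i j) 0

/-- Entrywise negative part `A⁻` of a matrix. -/
def aNeg {n : ℕ} (A : Matrix (Fin n) (Fin n) ℝ) : Matrix (Fin n) (Fin n) ℝ :=
  Matrix.of fun i j => max (-(A i j)) 0

/-- Euclidean norm of a vector in `ℝⁿ`. -/
def vnorm {n : ℕ} (v : Fin n → ℝ) : ℝ := Real.sqrt (∑ i, v i ^ 2)

/-- Entrywise sign of a vector: `1` on nonnegative entries, `-1` otherwise. -/
def signVec {n : ℕ} (v : Fin n → ℝ) : Fin n → ℝ := fun i => if 0 ≤ v i then 1 else -1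

/-- Real cube root. -/
def cbrt (x : ℝ) : ℝ := if 0 ≤ x then x ^ ((1 : ℝ)/3) else -((-x) ^ ((1 : ℝ)/3))

/-- The signed stochastic block model `SSBM(n, xs, pp, pm, qp, qm)`:
`A` is a random symmetric `{-1,0,1}`-matrix with zero diagonal, whose upper triangular
entries are independent, equal to `1` (resp. `-1`) with probability `pp` (resp. `pm`)
within communities and `qp` (resp. `qm`) across communities, relative to the
community label vector `xs ∈ {±1}ⁿ` with `1ᵀ xs = 0`. -/
structure IsSSBM {Ω : Type} [MeasurableSpace Ω] (P : Measure Ω)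
    {n : ℕ} (xs : Fin n → ℝ) (pp pm qp qm : ℝ)
    (A : Ω → Matrix (Fin n) (Fin n) ℝ) : Prop where
  pp_pos : 0 < pp
  pm_pos : 0 < pm
  qp_pos : 0 < qp
  qm_pos : 0 < qm
  p_sum_le : pp + pm ≤ 1
  q_sum_le : qp + qm ≤ 1
  labels : ∀ i, xs i = 1 ∨ xs i = -1
  balanced : ∑ i, xs i = 0
  meas : ∀ i j, Measurable fun ω => A ω i j
  symm : ∀ ω i j, A ω i j = A ω j i
  diag : ∀ ω i, A ω i i = 0
  vals : ∀ ω i j, A ω i j = 1 ∨ A ω i j = -1 ∨ A ω i j = 0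
  indep : iIndepFun (m := fun _ : {p : Fin n × Fin n // p.1 < p.2} => (inferInstance : MeasurableSpace ℝ))
      (fun (p : {p : Fin n × Fin n // p.1 < p.2}) ω => A ω p.1.1 p.1.2) P
  probIn : ∀ i j : Fin n, i < j → xs i * xs j = 1 →
      P {ω | A ω i j = 1} = ENNReal.ofReal pp ∧ P {ω | A ω i j = -1} = ENNReal.ofReal pm
  probOut : ∀ i j : Fin n, i < j → xs i * xs j = -1 →
      P {ω | A ω i j = 1} = ENNReal.ofReal qp ∧ P {ω | A ω i j = -1} = ENNReal.ofReal qm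

/-- Sum of the strictly upper triangular entries of a matrix. -/
def upperSum {n : ℕ} (M : Matrix (Fin n) (Fin n) ℝ) : ℝ :=
  ∑ i, ∑ j, if i < j then M i j else 0

/-- The all-ones `n × n` matrix. -/
def Jmat (n : ℕ) : Matrix (Fin n) (Fin n) ℝ := Matrix.of fun _ _ => 1

/-- The weight `ξ = log(β⁻/α⁻)/log(α⁺/β⁺)`. -/
def xiOf (αp βp αm βm : ℝ) : ℝ := Real.log (βm / αm) / Real.log (αp / βp)

/-- `Ã = A⁺ - ξ A⁻`. -/
def Atil {Ω : Type} {n : ℕ} (ξ : ℝ) (A : Ω → Matrix (Fin n) (Fin n) ℝ) (ω : Ω) :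
    Matrix (Fin n) (Fin n) ℝ := aPos (A ω) - ξ • aNeg (A ω)

/-- `ρ = 1ᵀ Ã 1 / n²`. -/
def rhoOf {Ω : Type} {n : ℕ} (ξ : ℝ) (A : Ω → Matrix (Fin n) (Fin n) ℝ) (ω : Ω) : ℝ :=
  (∑ i, ∑ j, Atil ξ A ω i j) / (n : ℝ) ^ 2

/-- `W = Ã - ρ J`. -/
def Wof {Ω : Type} {n : ℕ} (ξ : ℝ) (A : Ω → Matrix (Fin n) (Fin n) ℝ) (ω : Ω) :
    Matrix (Fin n) (Fin n) ℝ := Atil ξ A ω - rhoOf ξ A ω • Jmat n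

/-- `μ` is an eigenvalue of the matrix `M`. -/
def IsEigenvalue {n : ℕ} (M : Matrix (Fin n) (Fin n) ℝ) (μ : ℝ) : Prop :=
  ∃ v : Fin n → ℝ, v ≠ 0 ∧ M.mulVec v = μ • v

/-- The ℓ₂ operator (spectral) norm of a real square matrix. -/
def specNorm {n : ℕ} (M : Matrix (Fin n) (Fin n) ℝ) : ℝ :=
  ‖Matrix.toEuclideanCLM (𝕜 := ℝ) M‖

/-- Entrywise expectation of a random matrix. -/
def Emat {Ω : Type} [MeasurableSpace Ω] (P : Measure Ω) {n : ℕ}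
    (M : Ω → Matrix (Fin n) (Fin n) ℝ) : Matrix (Fin n) (Fin n) ℝ :=
  Matrix.of fun i j => ∫ ω, M ω i j ∂P

lemma my_iIndepFun_precomp {Ω ι ι' : Type*} [MeasurableSpace Ω] {P : Measure Ω}
    {f : ι → Ω → ℝ} (e : ι' → ι) (he : Function.Injective e)
    (h : iIndepFun (m := fun _ : ι => (inferInstance : MeasurableSpace ℝ)) f P) :
    iIndepFun (m := fun _ : ι' => (inferInstance : MeasurableSpace ℝ)) (fun j => f (e j)) P := by
  classical
  rw [iIndepFun_iff_measure_inter_preimage_eq_mul] at h ⊢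
  intro S sets hsets
  set sets' : ι → Set ℝ := fun p =>
    if hp : ∃ j, j ∈ S ∧ e j = p then sets hp.choose else Set.univ with hsets'
  have key : ∀ j ∈ S, sets' (e j) = sets j := by
    intro j hj
    have hex : ∃ j', j' ∈ S ∧ e j' = e j := ⟨j, hj, rfl⟩
    have h2 := hex.choose_spec
    have h3 : hex.choose = j := he h2.2
    simp only [hsets', dif_pos hex, h3]
  have h1 : (⋂ j ∈ S, (fun ω => f (e j) ω) ⁻¹' sets j)
      = ⋂ p ∈ S.image e, f p ⁻¹' sets' p := by
    rw [Finset.set_biInter_finset_image]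
    exact Set.iInter₂_congr fun j hj => by rw [key j hj]
  have h2 : (∏ j ∈ S, P ((fun ω => f (e j) ω) ⁻¹' sets j))
      = ∏ p ∈ S.image e, P (f p ⁻¹' sets' p) := by
    rw [Finset.prod_image (fun a _ b _ hab => he hab)]
    exact Finset.prod_congr rfl fun j hj => by rw [key j hj]
  rw [h1, h2]
  refine h (S.image e) ?_
  intro p hp
  obtain ⟨j, hj, rfl⟩ := Finset.mem_image.mp hp
  rw [key j hj]
  exact hsets j hj

lemma my_entry_mgf {Ω : Type} [MeasurableSpace Ω] (P : Measure Ω) [IsProbabilityMeasure P]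
    (X : Ω → ℝ) (hXm : Measurable X) (hvals : ∀ ω, X ω = 1 ∨ X ω = -1 ∨ X ω = 0)
    {r1 r2 : ℝ} (hr1 : 0 ≤ r1) (hr2 : 0 ≤ r2)
    (h1 : P {ω | X ω = 1} = ENNReal.ofReal r1)
    (h2 : P {ω | X ω = -1} = ENNReal.ofReal r2)
    (c ξ t : ℝ) :
    mgf (fun ω => c * (max (X ω) 0 - ξ * max (-X ω) 0)) P t
      = 1 + r1 * (Real.exp (t * c) - 1) + r2 * (Real.exp (-(t * c * ξ)) - 1) := by
  classical
  set S1 : Set Ω := {ω | X ω = 1} with hS1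
  set S2 : Set Ω := {ω | X ω = -1} with hS2
  set S0 : Set Ω := {ω | X ω = 0} with hS0
  have hm1 : MeasurableSet S1 := hXm (measurableSet_singleton (1:ℝ))
  have hm2 : MeasurableSet S2 := hXm (measurableSet_singleton (-1:ℝ))
  have hm0 : MeasurableSet S0 := hXm (measurableSet_singleton (0:ℝ))
  have hfun : (fun ω => Real.exp (t * (c * (max (X ω) 0 - ξ * max (-X ω) 0))))
      = fun ω => S1.indicator (fun _ => Real.exp (t * c)) ω
        + S2.indicator (fun _ => Real.exp (-(t * c * ξ))) ω
        + S0.indicator (fun _ => (1:ℝ)) ω := by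
    funext ω
    have hmax1 : max (1:ℝ) 0 = 1 := max_eq_left one_pos.le
    have hmax2 : max (-(1:ℝ)) 0 = 0 := max_eq_right (by norm_num)
    rcases hvals ω with h | h | h
    · have e1 : ω ∈ S1 := h
      have e2 : ω ∉ S2 := by simp only [hS2, Set.mem_setOf_eq, h]; norm_num
      have e0 : ω ∉ S0 := by simp only [hS0, Set.mem_setOf_eq, h]; norm_num
      rw [Set.indicator_of_mem e1, Set.indicator_of_notMem e2, Set.indicator_of_notMem e0,
        h]
      rw [show -(1:ℝ) = -1 from rfl, hmax1, hmax2]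
      ring_nf
    · have e1 : ω ∉ S1 := by simp only [hS1, Set.mem_setOf_eq, h]; norm_num
      have e2 : ω ∈ S2 := h
      have e0 : ω ∉ S0 := by simp only [hS0, Set.mem_setOf_eq, h]; norm_num
      rw [Set.indicator_of_notMem e1, Set.indicator_of_mem e2, Set.indicator_of_notMem e0,
        h]
      rw [neg_neg, hmax1, max_eq_right (by norm_num : (-1:ℝ) ≤ 0)]
      ring_nf
    · have e1 : ω ∉ S1 := by simp only [hS1, Set.mem_setOf_eq, h]; norm_num
      have e2 : ω ∉ S2 := by simp only [hS2, Set.mem_setOf_eq, h]; norm_num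
      have e0 : ω ∈ S0 := h
      rw [Set.indicator_of_notMem e1, Set.indicator_of_notMem e2, Set.indicator_of_mem e0,
        h]
      norm_num
  have i1 : Integrable (fun ω => S1.indicator (fun _ => Real.exp (t * c)) ω) P :=
    (integrable_const _).indicator hm1
  have i2 : Integrable (fun ω => S2.indicator (fun _ => Real.exp (-(t * c * ξ))) ω) P :=
    (integrable_const _).indicator hm2
  have i0 : Integrable (fun ω => S0.indicator (fun _ => (1:ℝ)) ω) P :=
    (integrable_const _).indicator hm0
  have hmgf : mgf (fun ω => c * (max (X ω) 0 - ξ * max (-X ω) 0)) P t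
      = (P S1).toReal * Real.exp (t * c) + (P S2).toReal * Real.exp (-(t * c * ξ))
        + (P S0).toReal * 1 := by
    have i12 : Integrable (fun ω => S1.indicator (fun _ => Real.exp (t * c)) ω
        + S2.indicator (fun _ => Real.exp (-(t * c * ξ))) ω) P := i1.add i2
    rw [mgf]
    simp_rw [hfun]
    rw [integral_add i12 i0, integral_add i1 i2,
      integral_indicator_const _ hm1, integral_indicator_const _ hm2,
      integral_indicator_const _ hm0]
    simp [smul_eq_mul, measureReal_def]
  have hP1 : (P S1).toReal = r1 := by rw [h1]; exact ENNReal.toReal_ofReal hr1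
  have hP2 : (P S2).toReal = r2 := by rw [h2]; exact ENNReal.toReal_ofReal hr2
  have hP0 : (P S0).toReal = 1 - r1 - r2 := by
    have hd12 : Disjoint S1 S2 := by
      rw [Set.disjoint_left]
      intro ω e1 e2
      rw [hS1, Set.mem_setOf_eq] at e1
      rw [hS2, Set.mem_setOf_eq] at e2
      rw [e1] at e2; norm_num at e2
    have hd0 : Disjoint (S1 ∪ S2) S0 := by
      rw [Set.disjoint_left]
      intro ω e12 e0
      rw [hS0, Set.mem_setOf_eq] at e0
      rcases e12 with e1 | e2
      · rw [hS1, Set.mem_setOf_eq] at e1; rw [e1] at e0; norm_num at e0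
      · rw [hS2, Set.mem_setOf_eq] at e2; rw [e2] at e0; norm_num at e0
    have hu : S1 ∪ S2 ∪ S0 = Set.univ := by
      ext ω
      simp only [Set.mem_union, Set.mem_univ, iff_true, hS1, hS2, hS0, Set.mem_setOf_eq]
      rcases hvals ω with h | h | h
      · exact Or.inl (Or.inl h)
      · exact Or.inl (Or.inr h)
      · exact Or.inr h
    have hsum : P S1 + P S2 + P S0 = 1 := by
      rw [← measure_union hd12 hm2, ← measure_union hd0 hm0, hu, measure_univ]
    have := congrArg ENNReal.toReal hsum
    rw [ENNReal.toReal_add (by finiteness) (measure_ne_top P _),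
      ENNReal.toReal_add (measure_ne_top P _) (measure_ne_top P _), ENNReal.toReal_one,
      hP1, hP2] at this
    linarith
  rw [hmgf, hP1, hP2, hP0]
  ring

lemma my_exp_half_log_div {a b : ℝ} (ha : 0 < a) (hb : 0 < b) :
    Real.exp (Real.log (a / b) / 2) = Real.sqrt a / Real.sqrt b := by
  have h1 : Real.exp (Real.log (a / b) / 2) ^ 2 = a / b := by
    rw [sq, ← Real.exp_add, add_halves, Real.exp_log (div_pos ha hb)]
  rw [← Real.sqrt_sq (Real.exp_pos _).le, h1, Real.sqrt_div ha.le]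


lemma my_log_le_two_sqrt {x : ℝ} (hx : 0 < x) : Real.log x ≤ 2 * Real.sqrt x := by
  have h5 := Real.log_sqrt hx.le
  have h6 := Real.log_le_sub_one_of_pos (Real.sqrt_pos.mpr hx)
  nlinarith [Real.sqrt_nonneg x]

lemma my_final_num (L Ln u0 nR γ γ' Δ : ℝ) (hL0 : 0 < L) (hLn0 : 0 < Ln)
    (hn0 : 0 < nR) (hsq : (4 * (|u0| + 1) / L) ^ 2 ≤ nR)
    (hγ2 : γ + 1 / Ln < γ') (hlog2 : Ln ≤ 2 * Real.sqrt nR) :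
    L / 2 * (γ * Ln) + (-(Ln / 2) * Δ - Ln / nR * u0)
      ≤ Ln * (-(1 / 2) * Δ + γ' / 2 * L) := by
  set C0 := 4 * (|u0| + 1) / L with hC0
  have hC00 : 0 ≤ C0 := by positivity
  have hsqn : C0 ≤ Real.sqrt nR := by rw [Real.le_sqrt hC00 hn0.le]; exact hsq
  have hss : Real.sqrt nR * Real.sqrt nR = nR := Real.mul_self_sqrt hn0.le
  have k2 : 4 * (|u0| + 1) ≤ L * Real.sqrt nR := by
    calc 4 * (|u0| + 1) = L * C0 := by rw [hC0]; field_simp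
      _ ≤ L * Real.sqrt nR := mul_le_mul_of_nonneg_left hsqn hL0.le
  have k3 : 2 * Ln * (-u0) ≤ 4 * Real.sqrt nR * (|u0| + 1) := by
    nlinarith [mul_nonneg (by linarith [neg_le_abs u0] : (0:ℝ) ≤ |u0| + u0) hLn0.le,
      mul_nonneg (by linarith : (0:ℝ) ≤ 2 * Real.sqrt nR - Ln) (abs_nonneg u0),
      Real.sqrt_nonneg nR]
  have k4 : 4 * Real.sqrt nR * (|u0| + 1) ≤ L * nR := by
    calc 4 * Real.sqrt nR * (|u0| + 1) = 4 * (|u0| + 1) * Real.sqrt nR := by ring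
      _ ≤ L * Real.sqrt nR * Real.sqrt nR :=
          mul_le_mul_of_nonneg_right k2 (Real.sqrt_nonneg _)
      _ = L * nR := by rw [mul_assoc, hss]
  have hdiv : -(L / 2) ≤ Ln / nR * u0 := by
    rw [div_mul_eq_mul_div, le_div_iff₀ hn0]
    linarith
  have hk1 : 1 ≤ (γ' - γ) * Ln := by
    have h7 : 1 / Ln ≤ γ' - γ := by linarith
    calc (1:ℝ) = 1 / Ln * Ln := by field_simp
      _ ≤ (γ' - γ) * Ln := mul_le_mul_of_nonneg_right h7 hLn0.le
  have m1 : L / 2 ≤ (γ' - γ) * Ln * (L / 2) := by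
    nlinarith [mul_nonneg (sub_nonneg.mpr hk1) (half_pos hL0).le]
  linarith [m1, hdiv]

set_option maxHeartbeats 1000000 in
/-- Chernoff-type tail bound for the entries of `W x*` under Assumption 1: if
`0 < γ + 1/log n < γ'`, then for all sufficiently large `n` and every index `i`,
`P(x*_i (Wx*)_i ≤ γ log n) ≤ n^{−½((√α⁺−√β⁺)² + (√α⁻−√β⁻)²) + (γ'/2) log(α⁺/β⁺)}`. -/
theorem stmt_11 (αp βp αm βm : ℝ)
    (hβp : 0 < βp) (hαp : βp < αp) (hαm : 0 < αm) (hβm : αm < βm)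
    (γ γ' : ℝ) :
    ∃ N : ℕ, ∀ n : ℕ, N ≤ n → Even n →
      0 < γ + 1 / Real.log n → γ + 1 / Real.log n < γ' →
      ∀ (Ω : Type) (mΩ : MeasurableSpace Ω) (P : Measure Ω), IsProbabilityMeasure P →
      ∀ (xs : Fin n → ℝ) (A : Ω → Matrix (Fin n) (Fin n) ℝ),
        IsSSBM P xs (αp * Real.log n / n) (αm * Real.log n / n)
          (βp * Real.log n / n) (βm * Real.log n / n) A →
        ∀ i : Fin n,
          (P {ω | xs i * ((Wof (xiOf αp βp αm βm) A ω).mulVec xs) i ≤ γ * Real.log n}).toReal ≤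
            (n : ℝ) ^ (-(1 / 2 : ℝ) * ((Real.sqrt αp - Real.sqrt βp) ^ 2
                + (Real.sqrt αm - Real.sqrt βm) ^ 2)
              + γ' / 2 * Real.log (αp / βp)) := by
  classical
  set u0 : ℝ := Real.sqrt αp * Real.sqrt βp - αp + Real.sqrt αm * Real.sqrt βm - αm with hu0
  set L : ℝ := Real.log (αp / βp) with hLdef
  have hαp0 : 0 < αp := hβp.trans hαp
  have hβm0 : 0 < βm := hαm.trans hβm
  have hL0 : 0 < L := Real.log_pos ((one_lt_div hβp).mpr hαp)
  set C0 : ℝ := 4 * (|u0| + 1) / L with hC0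
  have hC00 : 0 ≤ C0 := by positivity
  refine ⟨max 3 (Nat.ceil (C0 ^ 2) + 1), ?_⟩
  intro n hn _heven _hγ1 hγ2 Ω mΩ P hP xs A hA i
  have hn3 : (3:ℕ) ≤ n := le_trans (le_max_left _ _) hn
  have hnR : (3:ℝ) ≤ (n:ℝ) := by exact_mod_cast hn3
  have hn0 : (0:ℝ) < n := by linarith
  have hnceil : (C0 ^ 2 : ℝ) ≤ n := by
    calc (C0 ^ 2 : ℝ) ≤ (Nat.ceil (C0 ^ 2) : ℝ) := Nat.le_ceil _
      _ ≤ ((Nat.ceil (C0 ^ 2) + 1 : ℕ) : ℝ) := by push_cast; linarith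
      _ ≤ ((max 3 (Nat.ceil (C0 ^ 2) + 1) : ℕ) : ℝ) := by exact_mod_cast le_max_right _ _
      _ ≤ n := by exact_mod_cast hn
  set Ln : ℝ := Real.log n with hLndef
  have hLn1 : 1 < Ln := by
    rw [hLndef, Real.lt_log_iff_exp_lt hn0]
    have := Real.exp_one_lt_d9
    norm_num at this ⊢
    linarith
  have hLn0 : 0 < Ln := by linarith
  set Mv : ℝ := Real.log (βm / αm) with hMdef
  have hM0 : 0 < Mv := Real.log_pos ((one_lt_div hαm).mpr hβm)
  set ξv : ℝ := xiOf αp βp αm βm with hξdef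
  have hξv : ξv = Mv / L := rfl
  have hξ0 : 0 < ξv := by rw [hξv]; positivity
  set sp := Real.sqrt αp with hspdef
  set sq := Real.sqrt βp with hsqdef
  set sm := Real.sqrt αm with hsmdef
  set sn := Real.sqrt βm with hsndef
  have hsp0 : 0 < sp := Real.sqrt_pos.mpr hαp0
  have hsq0 : 0 < sq := Real.sqrt_pos.mpr hβp
  have hsm0 : 0 < sm := Real.sqrt_pos.mpr hαm
  have hsn0 : 0 < sn := Real.sqrt_pos.mpr hβm0
  have hsp2 : sp ^ 2 = αp := Real.sq_sqrt hαp0.le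
  have hsq2 : sq ^ 2 = βp := Real.sq_sqrt hβp.le
  have hsm2 : sm ^ 2 = αm := Real.sq_sqrt hαm.le
  have hsn2 : sn ^ 2 = βm := Real.sq_sqrt hβm0.le
  set t : ℝ := -(L / 2) with htdef
  have ht0 : t ≤ 0 := by rw [htdef]; linarith
  have hE3 : Real.exp (L / 2) = sp / sq := by
    rw [hLdef, hspdef, hsqdef]; exact my_exp_half_log_div hαp0 hβp
  have hE1 : Real.exp t = sq / sp := by rw [htdef, Real.exp_neg, hE3, inv_div]
  have hE2 : Real.exp (Mv / 2) = sn / sm := by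
    rw [hMdef, hsndef, hsmdef]; exact my_exp_half_log_div hβm0 hαm
  have hE4 : Real.exp (-(Mv / 2)) = sm / sn := by rw [Real.exp_neg, hE2, inv_div]
  have htξ : -(t * ξv) = Mv / 2 := by rw [htdef, hξv]; field_simp
  set pp : ℝ := αp * Ln / n with hppdef
  set pm : ℝ := αm * Ln / n with hpmdef
  set qp : ℝ := βp * Ln / n with hqpdef
  set qm : ℝ := βm * Ln / n with hqmdef
  set c : Fin n → ℝ := fun j => xs i * xs j with hcdef
  have hc1 : ∀ j, c j = 1 ∨ c j = -1 := by
    intro j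
    rcases hA.labels i with h1 | h1 <;> rcases hA.labels j with h2 | h2 <;>
      simp [hcdef, h1, h2]
  set φ : Fin n → ℝ → ℝ := fun j a => c j * (max a 0 - ξv * max (-a) 0) with hφdef
  have hφm : ∀ j, Measurable (φ j) :=
    fun j => measurable_const.mul ((measurable_id.max measurable_const).sub
      (measurable_const.mul (measurable_neg.max measurable_const)))
  set f : Fin n → Ω → ℝ := fun j ω => φ j (A ω i j) with hfdef
  have hfm : ∀ j, Measurable (f j) := fun j => (hφm j).comp (hA.meas i j)
  have hpt : ∀ ω, xs i * ((Wof ξv A ω).mulVec xs) i = ∑ j, f j ω := by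
    intro ω
    have h1 : ((Wof ξv A ω).mulVec xs) i
        = ∑ j, (Atil ξv A ω i j - rhoOf ξv A ω) * xs j := by
      simp [Wof, Matrix.mulVec, dotProduct, Matrix.sub_apply, Matrix.smul_apply,
        Jmat, Matrix.of_apply, smul_eq_mul]
    rw [h1, Finset.mul_sum]
    rw [Finset.sum_congr rfl (fun j (_ : j ∈ Finset.univ) => show
        xs i * ((Atil ξv A ω i j - rhoOf ξv A ω) * xs j)
          = c j * Atil ξv A ω i j - (xs i * rhoOf ξv A ω) * xs j from by
      simp only [hcdef]; ring)]
    rw [Finset.sum_sub_distrib, ← Finset.mul_sum, hA.balanced, mul_zero, sub_zero]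
    refine Finset.sum_congr rfl fun j _ => ?_
    simp only [hfdef, hφdef, Atil, aPos, aNeg, Matrix.sub_apply, Matrix.smul_apply,
      Matrix.of_apply, smul_eq_mul]
  have hfi : ∀ ω, f i ω = 0 := by
    intro ω
    simp [hfdef, hφdef, hA.diag ω i]
  set Sfun : Ω → ℝ := fun ω => ∑ j ∈ Finset.univ.erase i, f j ω with hSdef
  have hpt2 : ∀ ω, (∑ j, f j ω) = Sfun ω := by
    intro ω
    rw [← Finset.sum_erase_add Finset.univ (fun j => f j ω) (Finset.mem_univ i), hfi ω,
      add_zero]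
  set e : {j : Fin n // j ≠ i} → {p : Fin n × Fin n // p.1 < p.2} := fun j =>
    if h : i < j.1 then ⟨(i, j.1), h⟩
    else ⟨(j.1, i), lt_of_le_of_ne (not_lt.mp h) j.2⟩ with hedef
  have he : Function.Injective e := by
    intro a b hab
    apply Subtype.ext
    have hab' := congrArg (fun p => (p : {p : Fin n × Fin n // p.1 < p.2}).1) hab
    by_cases h1 : i < a.1 <;> by_cases h2 : i < b.1
    · simp only [hedef, dif_pos h1, dif_pos h2, Prod.mk.injEq] at hab'
      exact hab'.2
    · simp only [hedef, dif_pos h1, dif_neg h2, Prod.mk.injEq] at hab'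
      exact absurd hab'.1.symm b.2
    · simp only [hedef, dif_neg h1, dif_pos h2, Prod.mk.injEq] at hab'
      exact absurd hab'.1 a.2
    · simp only [hedef, dif_neg h1, dif_neg h2, Prod.mk.injEq] at hab'
      exact hab'.1
  set g : {j : Fin n // j ≠ i} → Ω → ℝ :=
    fun j ω => φ j.1 (A ω (e j).1.1 (e j).1.2) with hgdef
  have hge : ∀ j, g j = f j.1 := by
    intro j
    funext ω
    simp only [hgdef, hfdef]
    by_cases h : i < j.1
    · simp only [hedef, dif_pos h]
    · simp only [hedef, dif_neg h]
      rw [hA.symm ω j.1 i]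
  have hgm : ∀ j, Measurable (g j) := fun j => (hφm j.1).comp (hA.meas _ _)
  have hInd : iIndepFun (m := fun _ => (inferInstance : MeasurableSpace ℝ)) g P := by
    have h0 := my_iIndepFun_precomp e he hA.indep
    have h1 := h0.comp (fun j => φ j.1) (fun j => hφm j.1)
    exact h1
  have hS_eq : Sfun = ∑ j : {j : Fin n // j ≠ i}, g j := by
    funext ω
    simp only [hSdef, Finset.sum_apply]
    calc (∑ j ∈ Finset.univ.erase i, f j ω)
        = ∑ j : {j : Fin n // j ≠ i}, f j.1 ω :=
          Finset.sum_subtype (Finset.univ.erase i)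
            (by intro x; simp [Finset.mem_erase]) (fun j => f j ω)
      _ = ∑ j : {j : Fin n // j ≠ i}, g j ω :=
          Finset.sum_congr rfl fun j _ => by rw [hge j]
  set win : ℝ := pp * (sq / sp - 1) + pm * (sn / sm - 1) with hwindef
  set wout : ℝ := qp * (sp / sq - 1) + qm * (sm / sn - 1) with hwoutdef
  set w : Fin n → ℝ := fun j => (win + wout) / 2 + c j * ((win - wout) / 2) with hwdef
  have hmain : ∀ j : {j : Fin n // j ≠ i}, mgf (g j) P t ≤ Real.exp (w j.1) := by
    intro j
    have hab : (e j).1.1 < (e j).1.2 := (e j).2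
    have hvj : ∀ ω, A ω (e j).1.1 (e j).1.2 = 1 ∨ A ω (e j).1.1 (e j).1.2 = -1
        ∨ A ω (e j).1.1 (e j).1.2 = 0 := fun ω => hA.vals ω _ _
    have hmj : Measurable fun ω => A ω (e j).1.1 (e j).1.2 := hA.meas _ _
    have hgj : g j = fun ω => c j.1 * (max (A ω (e j).1.1 (e j).1.2) 0
        - ξv * max (-(A ω (e j).1.1 (e j).1.2)) 0) := rfl
    have hprod : xs (e j).1.1 * xs (e j).1.2 = c j.1 := by
      by_cases h : i < j.1
      · simp only [hedef, dif_pos h, hcdef]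
      · simp only [hedef, dif_neg h, hcdef]; exact mul_comm _ _
    rcases hc1 j.1 with hcj | hcj
    · obtain ⟨hp1, hp2⟩ := hA.probIn _ _ hab (by rw [hprod, hcj])
      have hmgf' : mgf (g j) P t
          = 1 + pp * (Real.exp (t * c j.1) - 1) + pm * (Real.exp (-(t * c j.1 * ξv)) - 1) := by
        rw [hgj]
        exact my_entry_mgf P _ hmj hvj (le_of_lt hA.pp_pos) (le_of_lt hA.pm_pos)
          hp1 hp2 (c j.1) ξv t
      rw [hcj, mul_one] at hmgf'
      rw [hE1, htξ, hE2] at hmgf'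
      have hw : w j.1 = win := by simp only [hwdef, hcj]; ring
      rw [hmgf', hw, hwindef]
      linarith [Real.add_one_le_exp (pp * (sq / sp - 1) + pm * (sn / sm - 1))]
    · obtain ⟨hp1, hp2⟩ := hA.probOut _ _ hab (by rw [hprod, hcj])
      have hmgf' : mgf (g j) P t
          = 1 + qp * (Real.exp (t * c j.1) - 1) + qm * (Real.exp (-(t * c j.1 * ξv)) - 1) := by
        rw [hgj]
        exact my_entry_mgf P _ hmj hvj (le_of_lt hA.qp_pos) (le_of_lt hA.qm_pos)
          hp1 hp2 (c j.1) ξv t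
      rw [hcj] at hmgf'
      have hout1 : t * (-1) = L / 2 := by rw [htdef]; ring
      rw [hout1] at hmgf'
      have hout2 : -(L / 2 * ξv) = -(Mv / 2) := by rw [hξv]; field_simp
      rw [hout2, hE3, hE4] at hmgf'
      have hw : w j.1 = wout := by simp only [hwdef, hcj]; ring
      rw [hmgf', hw, hwoutdef]
      linarith [Real.add_one_le_exp (qp * (sp / sq - 1) + qm * (sm / sn - 1))]
  have hSm : Measurable Sfun := Finset.measurable_sum _ fun j _ => hfm j
  have habs : ∀ ω, |Sfun ω| ≤ (n : ℝ) * (1 + ξv) := by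
    intro ω
    have h1 : ∀ j, |f j ω| ≤ 1 + ξv := by
      intro j
      have hcabs : |c j| = 1 := by rcases hc1 j with h | h <;> rw [h] <;> norm_num
      have hfj : f j ω = c j * (max (A ω i j) 0 - ξv * max (-(A ω i j)) 0) := rfl
      rw [hfj, abs_mul, hcabs, one_mul]
      rcases hA.vals ω i j with h | h | h
      · rw [h, show max (1:ℝ) 0 = 1 from max_eq_left (by norm_num),
          show max (-(1:ℝ)) 0 = 0 from max_eq_right (by norm_num)]
        rw [mul_zero, sub_zero, abs_one]
        linarith
      · rw [h, show max (-1:ℝ) 0 = 0 from max_eq_right (by norm_num),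
          show max (-(-1:ℝ)) 0 = 1 from by norm_num]
        rw [mul_one, zero_sub, abs_neg, abs_of_pos hξ0]
        linarith
      · rw [h, neg_zero, max_self, mul_zero, sub_zero, abs_zero]
        linarith
    calc |Sfun ω| ≤ ∑ j ∈ Finset.univ.erase i, |f j ω| :=
          Finset.abs_sum_le_sum_abs _ _
      _ ≤ ∑ _j ∈ Finset.univ.erase i, (1 + ξv) := Finset.sum_le_sum fun j _ => h1 j
      _ = ((Finset.univ.erase i).card : ℝ) * (1 + ξv) := by
          rw [Finset.sum_const, nsmul_eq_mul]
      _ ≤ (n : ℝ) * (1 + ξv) := by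
          have hcard : ((Finset.univ.erase i).card : ℝ) ≤ n := by
            have h2 : (Finset.univ.erase i).card ≤ Finset.univ.card :=
              Finset.card_erase_le
            have h3 : (Finset.univ : Finset (Fin n)).card = n := by
              rw [Finset.card_univ, Fintype.card_fin]
            have := h3 ▸ h2
            exact_mod_cast this
          have : (0:ℝ) ≤ 1 + ξv := by linarith
          exact mul_le_mul_of_nonneg_right hcard this
  have h_int : Integrable (fun ω => Real.exp (t * Sfun ω)) P := by
    refine Integrable.mono' (integrable_const (Real.exp (|t| * ((n : ℝ) * (1 + ξv)))))
      ((hSm.const_mul t).exp.aestronglyMeasurable) (Filter.Eventually.of_forall fun ω => ?_)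
    rw [Real.norm_eq_abs, Real.abs_exp]
    apply Real.exp_le_exp.mpr
    calc t * Sfun ω ≤ |t * Sfun ω| := le_abs_self _
      _ = |t| * |Sfun ω| := abs_mul _ _
      _ ≤ |t| * ((n : ℝ) * (1 + ξv)) := mul_le_mul_of_nonneg_left (habs ω) (abs_nonneg t)
  have hCh := measure_le_le_exp_mul_mgf (μ := P) (X := Sfun) (γ * Ln) ht0 h_int
  have hsetEq : {ω | xs i * ((Wof ξv A ω).mulVec xs) i ≤ γ * Ln}
      = {ω | Sfun ω ≤ γ * Ln} := by
    ext ω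
    simp only [Set.mem_setOf_eq, hpt ω, hpt2 ω]
  have hprod1 : mgf Sfun P t = ∏ j : {j : Fin n // j ≠ i}, mgf (g j) P t := by
    rw [hS_eq]
    exact hInd.mgf_sum hgm Finset.univ
  have hprod2 : mgf Sfun P t ≤ Real.exp (∑ j : {j : Fin n // j ≠ i}, w j.1) := by
    rw [hprod1, Real.exp_sum]
    exact Finset.prod_le_prod (fun j _ => mgf_nonneg) (fun j _ => hmain j)
  have hsumw : (∑ j : {j : Fin n // j ≠ i}, w j.1)
      = (n : ℝ) * ((win + wout) / 2) - win := by
    have h1 : (∑ j : {j : Fin n // j ≠ i}, w j.1) = ∑ j ∈ Finset.univ.erase i, w j :=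
      (Finset.sum_subtype _ (by intro x; simp [Finset.mem_erase]) w).symm
    have h2 : (∑ j ∈ Finset.univ.erase i, w j) + w i = ∑ j, w j :=
      Finset.sum_erase_add _ _ (Finset.mem_univ i)
    have h3 : (∑ j, w j) = (n : ℝ) * ((win + wout) / 2) := by
      rw [Finset.sum_congr rfl (fun j (_ : j ∈ Finset.univ) => show
          w j = (win + wout) / 2 + ((win - wout) / 2) * c j from by
        simp only [hwdef]; ring)]
      rw [Finset.sum_add_distrib, ← Finset.mul_sum]
      have hc0 : (∑ j, c j) = 0 := by
        simp only [hcdef]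
        rw [← Finset.mul_sum, hA.balanced, mul_zero]
      rw [hc0, mul_zero, add_zero, Finset.sum_const, Finset.card_univ, Fintype.card_fin,
        nsmul_eq_mul]
    have h4 : w i = win := by
      have hci : c i = 1 := by
        rcases hA.labels i with h | h <;> simp [hcdef, h]
      simp only [hwdef, hci]; ring
    rw [h1, ← h3, ← h2, h4]; ring
  rw [hsetEq]
  have hwin2 : win = Ln / (n : ℝ) * u0 := by
    rw [hwindef, hppdef, hpmdef, hu0, ← hsp2, ← hsm2]
    field_simp
    ring
  have hnw : (n : ℝ) * ((win + wout) / 2)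
      = -(Ln / 2) * ((sp - sq) ^ 2 + (sm - sn) ^ 2) := by
    rw [hwindef, hwoutdef, hppdef, hpmdef, hqpdef, hqmdef,
      ← hsp2, ← hsq2, ← hsm2, ← hsn2]
    field_simp
    ring
  calc (P {ω | Sfun ω ≤ γ * Ln}).toReal
      ≤ Real.exp (-t * (γ * Ln)) * mgf Sfun P t := hCh
    _ ≤ Real.exp (-t * (γ * Ln))
        * Real.exp ((n : ℝ) * ((win + wout) / 2) - win) := by
        refine mul_le_mul_of_nonneg_left ?_ (Real.exp_pos _).le
        rw [← hsumw]
        exact hprod2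
    _ = Real.exp (-t * (γ * Ln) + ((n : ℝ) * ((win + wout) / 2) - win)) :=
        (Real.exp_add _ _).symm
    _ ≤ (n : ℝ) ^ (-(1 / 2 : ℝ) * ((sp - sq) ^ 2 + (sm - sn) ^ 2) + γ' / 2 * L) := by
        rw [Real.rpow_def_of_pos hn0, ← hLndef]
        apply Real.exp_le_exp.mpr
        have ht3 : -t = L / 2 := by rw [htdef]; ring
        rw [ht3, hnw, hwin2]
        exact my_final_num L Ln u0 (n : ℝ) γ γ' _ hL0 hLn0 hn0
          (by rw [← hC0]; exact hnceil) hγ2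
          (by rw [hLndef]; exact my_log_le_two_sqrt hn0)

end
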